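/- Let q be an odd prime power and n ≥ 2. Then there exists a = (a_1,…,a_{n−1}) in the algebraic closure F̄_q of F_q such that, writing f(x) = x^n + a_{n−1}x^{n−1} + ⋯ + a_1 x ∈ F̄_q[x], the polynomial D_f(t) = disc_x(f(x)+t) ∈ F̄_q[t] has positive degree in t and is squarefree. -/

import Mathlib

open Polynomial

set_option maxRecDepth 8000
set_option maxHeartbeats 1000000

noncomputable section
open scoped Classical

/-- The Sylvester matrix of `P` and `Q` with respect to formal degrees `m` and `n`. -/
def sylvesterMatrix {R : Type*} [CommRing R] (m n : ℕ) (P Q : Polynomial R) :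
    Matrix (Fin (n + m)) (Fin (n + m)) R :=
  Matrix.of fun i j =>
    if (i : ℕ) < n then
      (if (i : ℕ) ≤ (j : ℕ) ∧ (j : ℕ) ≤ (i : ℕ) + m then P.coeff (m + i - j) else 0)
    else
      (if (i : ℕ) - n ≤ (j : ℕ) ∧ (j : ℕ) ≤ (i : ℕ) then Q.coeff ((i : ℕ) - j) else 0)

/-- The resultant of `P` and `Q` with respect to formal degrees `m` and `n`:
the determinant of the `(m+n) × (m+n)` Sylvester matrix. -/
def presultant {R : Type*} [CommRing R] (m n : ℕ) (P Q : Polynomial R) : R :=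
  (sylvesterMatrix m n P Q).det

/-- The discriminant of a polynomial `P` of degree `m`; for monic `P` this agrees with the
standard discriminant `∏_{i<j} (r_i - r_j)²` over the roots of `P` in an algebraic closure. -/
def pdisc {R : Type*} [CommRing R] (P : Polynomial R) : R :=
  (-1) ^ (P.natDegree * (P.natDegree - 1) / 2) *
    presultant P.natDegree (P.natDegree - 1) P (Polynomial.derivative P)

/-- `Dpoly g` is `D_g(t) = disc_x (g(x) + t)`, a polynomial in `t`. -/
def Dpoly {R : Type*} [CommRing R] (g : Polynomial R) : Polynomial R :=
  pdisc (g.map Polynomial.C + Polynomial.C Polynomial.X)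

/-- `fPoly n a = x^n + a_{n-1} x^{n-1} + ... + a_1 x`. -/
def fPoly {R : Type*} [CommRing R] (n : ℕ) (a : Fin (n - 1) → R) : Polynomial R :=
  X ^ n + ∑ i : Fin (n - 1), Polynomial.C (a i) * X ^ ((i : ℕ) + 1)

variable {K : Type*} [Field K]

/-- sign of the order-reversing permutation, as a ring element -/
def sgn (K : Type*) [Field K] (r : ℕ) : K :=
  ((Equiv.Perm.sign (Fin.revPerm : Equiv.Perm (Fin r)) : ℤ) : K)

lemma sgn_mul_self (K : Type*) [Field K] (r : ℕ) : sgn K r * sgn K r = 1 := by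
  unfold sgn
  rw [← Int.cast_mul, ← Units.val_mul, Int.units_mul_self]
  simp

lemma sgn_ne_zero (K : Type*) [Field K] (r : ℕ) : sgn K r ≠ 0 := by
  intro h
  have := sgn_mul_self K r
  rw [h, mul_zero] at this
  exact zero_ne_one this

lemma det_vand_rev (r : ℕ) (δ : Fin r → K) :
    (Matrix.of fun i k : Fin r => δ k ^ (r - 1 - (i : ℕ))).det
      = sgn K r * ∏ i : Fin r, ∏ j ∈ Finset.Ioi i, (δ j - δ i) := by
  have h : (Matrix.of fun i k : Fin r => δ k ^ (r - 1 - (i : ℕ)))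
      = (Matrix.vandermonde δ).transpose.submatrix Fin.revPerm id := by
    ext i k
    simp [Matrix.vandermonde, Fin.val_rev]
    congr 1
    omega
  rw [h, Matrix.det_permute, Matrix.det_transpose, Matrix.det_vandermonde]
  rfl


lemma syl_mul_vand (m n : ℕ) (P Q : K[X]) (hP : P.natDegree ≤ m) (hQ : Q.natDegree ≤ n)
    (γ : Fin (n + m) → K) (i k : Fin (n + m)) :
    (sylvesterMatrix m n P Q * Matrix.of fun (j _l : Fin (n+m)) => γ _l ^ (n + m - 1 - (j:ℕ))) i k =
      if (i : ℕ) < n then γ k ^ (n - 1 - (i:ℕ)) * P.eval (γ k)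
      else γ k ^ (n + m - 1 - (i:ℕ)) * Q.eval (γ k) := by
  rw [Matrix.mul_apply]
  simp only [Matrix.of_apply]
  by_cases h : (i : ℕ) < n
  · rw [if_pos h]
    have h1 : (∑ j : Fin (n+m), sylvesterMatrix m n P Q i j * γ k ^ (n + m - 1 - (j:ℕ)))
        = ∑ j ∈ Finset.range (n+m),
            (if (i:ℕ) ≤ j ∧ j ≤ (i:ℕ) + m then P.coeff (m + i - j) * γ k ^ (n+m-1-j) else 0) := by
      rw [← Fin.sum_univ_eq_sum_range
        (fun j => if (i:ℕ) ≤ j ∧ j ≤ (i:ℕ)+m then P.coeff (m+i-j) * γ k ^ (n+m-1-j) else 0) (n+m)]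
      refine Finset.sum_congr rfl fun j _ => ?_
      simp only [sylvesterMatrix, Matrix.of_apply, if_pos h, ite_mul, zero_mul]
    rw [h1, ← Finset.sum_filter]
    have hfil : (Finset.range (n+m)).filter (fun j => (i:ℕ) ≤ j ∧ j ≤ (i:ℕ)+m)
        = Finset.Ico (i:ℕ) ((i:ℕ)+m+1) := by
      ext a; simp only [Finset.mem_filter, Finset.mem_range, Finset.mem_Ico]; omega
    rw [hfil, Finset.sum_Ico_eq_sum_range]
    have h2 : (i:ℕ) + m + 1 - i = m + 1 := by omega
    rw [h2]
    have hev : P.eval (γ k) = ∑ l ∈ Finset.range (m+1), P.coeff l * γ k ^ l :=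
      eval_eq_sum_range' (lt_of_le_of_lt hP (Nat.lt_succ_self m)) _
    rw [hev, Finset.mul_sum]
    rw [← Finset.sum_range_reflect (fun l => γ k ^ (n - 1 - (i:ℕ)) * (P.coeff l * γ k ^ l)) (m+1)]
    refine Finset.sum_congr rfl fun l hl => ?_
    have hl' : l ≤ m := by simpa [Nat.lt_succ_iff] using hl
    have e1 : m + (i:ℕ) - ((i:ℕ) + l) = m + 1 - 1 - l := by omega
    have e2 : n + m - 1 - ((i:ℕ) + l) = (n - 1 - (i:ℕ)) + (m + 1 - 1 - l) := by omega
    rw [e1, e2, pow_add]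
    ring
  · rw [if_neg h]
    push_neg at h
    have h1 : (∑ j : Fin (n+m), sylvesterMatrix m n P Q i j * γ k ^ (n + m - 1 - (j:ℕ)))
        = ∑ j ∈ Finset.range (n+m),
            (if (i:ℕ) - n ≤ j ∧ j ≤ (i:ℕ) then Q.coeff ((i:ℕ) - j) * γ k ^ (n+m-1-j) else 0) := by
      rw [← Fin.sum_univ_eq_sum_range
        (fun j => if (i:ℕ) - n ≤ j ∧ j ≤ (i:ℕ) then Q.coeff ((i:ℕ)-j) * γ k ^ (n+m-1-j) else 0) (n+m)]
      refine Finset.sum_congr rfl fun j _ => ?_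
      simp only [sylvesterMatrix, Matrix.of_apply, if_neg (not_lt.mpr h), ite_mul, zero_mul]
    rw [h1, ← Finset.sum_filter]
    have hi : (i:ℕ) < n + m := i.isLt
    have hfil : (Finset.range (n+m)).filter (fun j => (i:ℕ) - n ≤ j ∧ j ≤ (i:ℕ))
        = Finset.Ico ((i:ℕ) - n) ((i:ℕ)+1) := by
      ext a; simp only [Finset.mem_filter, Finset.mem_range, Finset.mem_Ico]; omega
    rw [hfil, Finset.sum_Ico_eq_sum_range]
    have h2 : (i:ℕ) + 1 - ((i:ℕ) - n) = n + 1 := by omega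
    rw [h2]
    have hev : Q.eval (γ k) = ∑ l ∈ Finset.range (n+1), Q.coeff l * γ k ^ l :=
      eval_eq_sum_range' (lt_of_le_of_lt hQ (Nat.lt_succ_self n)) _
    rw [hev, Finset.mul_sum]
    rw [← Finset.sum_range_reflect (fun l => γ k ^ (n + m - 1 - (i:ℕ)) * (Q.coeff l * γ k ^ l)) (n+1)]
    refine Finset.sum_congr rfl fun l hl => ?_
    have hl' : l ≤ n := by simpa [Nat.lt_succ_iff] using hl
    have e1 : (i:ℕ) - ((i:ℕ) - n + l) = n + 1 - 1 - l := by omega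
    have e2 : n + m - 1 - ((i:ℕ) - n + l) = (n + m - 1 - (i:ℕ)) + (n + 1 - 1 - l) := by omega
    rw [e1, e2, pow_add]
    ring
lemma prod_Ioi_eq_ite {r : ℕ} (f : Fin r → K) (k : Fin r) :
    (∏ l ∈ Finset.Ioi k, f l) = ∏ l : Fin r, if k < l then f l else 1 := by
  rw [← Finset.prod_filter]
  congr 1
  ext a
  simp

lemma delta_split (n m : ℕ) (β : Fin n → K) (α : Fin m → K) :
    (∏ k : Fin (n+m), ∏ l ∈ Finset.Ioi k, (Fin.append β α l - Fin.append β α k)) =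
    ((∏ k : Fin n, ∏ l ∈ Finset.Ioi k, (β l - β k)) *
     (∏ k : Fin m, ∏ l ∈ Finset.Ioi k, (α l - α k))) *
    ∏ k : Fin m, ∏ j : Fin n, (α k - β j) := by
  have hcc : ∀ (k l : Fin n), (Fin.castAdd m k < Fin.castAdd m l) ↔ k < l := by
    intro k l
    rw [Fin.lt_def, Fin.lt_def]
    simp
  have hnn : ∀ (k l : Fin m), (Fin.natAdd n k < Fin.natAdd n l) ↔ k < l := by
    intro k l
    rw [Fin.lt_def, Fin.lt_def]
    simp
  have hcn : ∀ (k : Fin n) (l : Fin m), Fin.castAdd m k < Fin.natAdd n l := by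
    intro k l
    rw [Fin.lt_def]
    have := k.isLt
    simp
    omega
  have hnc : ∀ (k : Fin m) (l : Fin n), ¬ (Fin.natAdd n k < Fin.castAdd m l) := by
    intro k l
    rw [Fin.lt_def]
    have := l.isLt
    simp
    omega
  simp only [prod_Ioi_eq_ite]
  rw [Fin.prod_univ_add]
  have hL1 : (∏ k : Fin n, ∏ l : Fin (n+m),
      if Fin.castAdd m k < l then Fin.append β α l - Fin.append β α (Fin.castAdd m k) else 1)
      = (∏ k : Fin n, ∏ l : Fin n, if k < l then β l - β k else 1)
        * ∏ k : Fin n, ∏ l : Fin m, (α l - β k) := by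
    rw [← Finset.prod_mul_distrib]
    refine Finset.prod_congr rfl fun k _ => ?_
    rw [Fin.prod_univ_add]
    congr 1
    · refine Finset.prod_congr rfl fun l _ => ?_
      rw [Fin.append_left, Fin.append_left]
      by_cases hkl : k < l
      · rw [if_pos ((hcc k l).2 hkl), if_pos hkl]
      · rw [if_neg (fun hh => hkl ((hcc k l).1 hh)), if_neg hkl]
    · refine Finset.prod_congr rfl fun l _ => ?_
      rw [Fin.append_right, Fin.append_left]
      exact if_pos (hcn k l)
  have hL2 : (∏ k : Fin m, ∏ l : Fin (n+m),
      if Fin.natAdd n k < l then Fin.append β α l - Fin.append β α (Fin.natAdd n k) else 1)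
      = ∏ k : Fin m, ∏ l : Fin m, if k < l then α l - α k else 1 := by
    refine Finset.prod_congr rfl fun k _ => ?_
    rw [Fin.prod_univ_add]
    have e1 : (∏ l : Fin n,
        if Fin.natAdd n k < Fin.castAdd m l then Fin.append β α (Fin.castAdd m l) - Fin.append β α (Fin.natAdd n k) else 1) = 1 := by
      apply Finset.prod_eq_one
      intro l _
      exact if_neg (hnc k l)
    rw [e1, one_mul]
    refine Finset.prod_congr rfl fun l _ => ?_
    rw [Fin.append_right, Fin.append_right]
    by_cases hkl : k < l
    · rw [if_pos ((hnn k l).2 hkl), if_pos hkl]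
    · rw [if_neg (fun hh => hkl ((hnn k l).1 hh)), if_neg hkl]
  rw [hL1, hL2]
  rw [Finset.prod_comm (f := fun k j => α j - β k)]
  ring
lemma presultant_map {R S : Type*} [CommRing R] [CommRing S] (φ : R →+* S) (m n : ℕ)
    (P Q : Polynomial R) :
    φ (presultant m n P Q) = presultant m n (P.map φ) (Q.map φ) := by
  unfold presultant
  rw [RingHom.map_det]
  congr 1
  ext i j
  simp only [sylvesterMatrix, Matrix.map_apply, Matrix.of_apply, RingHom.mapMatrix_apply]
  by_cases h : (i : ℕ) < n
  · simp [h, apply_ite φ, coeff_map]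
  · simp [h, apply_ite φ, coeff_map]

lemma presultant_succ (m n : ℕ) (P Q : K[X]) (hP : P.coeff m = 1) (hQ : Q.coeff (n+1) = 0) :
    presultant m (n+1) P Q = presultant m n P Q := by
  have hcast : (n+1)+m = (n+m)+1 := by omega
  set e : Fin ((n+1)+m) ≃ Fin ((n+m)+1) := finCongr hcast with he
  set A : Matrix (Fin ((n+m)+1)) (Fin ((n+m)+1)) K :=
    (sylvesterMatrix m (n+1) P Q).submatrix e.symm e.symm with hA
  have h1 : presultant m (n+1) P Q = A.det := by
    rw [hA, Matrix.det_submatrix_equiv_self]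
    rfl
  rw [h1, Matrix.det_succ_column_zero]
  have hA0 : ∀ i : Fin ((n+m)+1), i ≠ 0 → A i 0 = 0 := by
    intro i hi
    have hival : (i : ℕ) ≠ 0 := fun h => hi (Fin.ext h)
    simp only [hA, Matrix.submatrix_apply, sylvesterMatrix, Matrix.of_apply]
    have hv : ((e.symm i : Fin ((n+1)+m)) : ℕ) = (i : ℕ) := rfl
    have hv0 : ((e.symm 0 : Fin ((n+1)+m)) : ℕ) = 0 := rfl
    rw [hv, hv0]
    by_cases h : (i : ℕ) < n + 1
    · rw [if_pos h, if_neg (by omega)]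
    · rw [if_neg h]
      by_cases h2 : (i:ℕ) - (n+1) ≤ 0 ∧ 0 ≤ (i:ℕ)
      · rw [if_pos h2]
        have : (i : ℕ) = n + 1 := by omega
        rw [this]
        simpa using hQ
      · rw [if_neg h2]
  rw [Finset.sum_eq_single 0]
  · have hA00 : A 0 0 = 1 := by
      simp only [hA, Matrix.submatrix_apply, sylvesterMatrix, Matrix.of_apply]
      have hv0 : ((e.symm 0 : Fin ((n+1)+m)) : ℕ) = 0 := rfl
      rw [hv0, if_pos (by omega), if_pos (by omega)]
      simpa using hP
    rw [hA00]
    have hsub : A.submatrix (Fin.succAbove 0) Fin.succ = sylvesterMatrix m n P Q := by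
      ext i j
      rw [Fin.succAbove_zero]
      simp only [hA, Matrix.submatrix_apply, sylvesterMatrix, Matrix.of_apply]
      have hvi : ((e.symm i.succ : Fin ((n+1)+m)) : ℕ) = (i : ℕ) + 1 := rfl
      have hvj : ((e.symm j.succ : Fin ((n+1)+m)) : ℕ) = (j : ℕ) + 1 := rfl
      rw [hvi, hvj]
      by_cases h : (i : ℕ) < n
      · rw [if_pos (by omega), if_pos h]
        by_cases h2 : (i:ℕ) ≤ (j:ℕ) ∧ (j:ℕ) ≤ (i:ℕ) + m
        · rw [if_pos (by omega), if_pos h2]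
          congr 1
          omega
        · rw [if_neg (by omega), if_neg h2]
      · rw [if_neg (by omega), if_neg h]
        by_cases h2 : (i:ℕ) - n ≤ (j:ℕ) ∧ (j:ℕ) ≤ (i:ℕ)
        · rw [if_pos (by omega), if_pos h2]
          congr 1
          omega
        · by_cases h3 : (i:ℕ) + 1 - (n+1) ≤ (j:ℕ) + 1 ∧ (j:ℕ) + 1 ≤ (i:ℕ) + 1
          · rw [if_pos h3, if_neg h2]
            -- then i - n = j + 1, entry Q.coeff (n+1) = 0
            have hij : (i:ℕ) - n = (j:ℕ) + 1 := by omega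
            have : (i:ℕ) + 1 - ((j:ℕ)+1) = n + 1 := by omega
            rw [this, hQ]
          · rw [if_neg h3, if_neg h2]
    rw [hsub]
    simp [presultant]
  · intro i _ hi
    rw [hA0 i hi]
    ring
  · intro h
    exact absurd (Finset.mem_univ 0) h

lemma presultant_ge (m : ℕ) (P Q : K[X]) (hP : P.coeff m = 1) (r : ℕ)
    (hQ : ∀ k, r < k → Q.coeff k = 0) :
    ∀ n, r ≤ n → presultant m n P Q = presultant m r P Q := by
  intro n
  induction n with
  | zero => intro h; rw [Nat.le_zero.mp h]
  | succ n ih =>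
    intro h
    rcases Nat.lt_or_ge r (n+1) with h1 | h1
    · have hrn : r ≤ n := by omega
      rw [presultant_succ m n P Q hP (hQ (n+1) (by omega)), ih hrn]
    · have : r = n + 1 := by omega
      rw [this]
lemma presultant_eq (m n : ℕ) (P Q : K[X]) (α : Fin m → K) (β : Fin n → K) (b : K)
    (hP : P = ∏ i : Fin m, (X - C (α i)))
    (hQ : Q = C b * ∏ j : Fin n, (X - C (β j)))
    (hγ : Function.Injective (Fin.append β α)) :
    presultant m n P Q
      = sgn K (n+m) * sgn K n * sgn K m * b ^ m * ∏ j : Fin n, P.eval (β j) := by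
  set γ : Fin (n + m) → K := Fin.append β α with hγdef
  have hPdeg : P.natDegree ≤ m := by
    rw [hP, natDegree_prod_of_monic _ _ (fun i _ => monic_X_sub_C _)]
    simp
  have hQdeg : Q.natDegree ≤ n := by
    rw [hQ]
    refine natDegree_mul_le.trans ?_
    rw [natDegree_prod_of_monic _ _ (fun i _ => monic_X_sub_C _)]
    simp
  have hPzero : ∀ k : Fin m, P.eval (α k) = 0 := by
    intro k
    rw [hP, eval_prod]
    exact Finset.prod_eq_zero (Finset.mem_univ k) (by simp)
  have hQzero : ∀ j : Fin n, Q.eval (β j) = 0 := by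
    intro j
    rw [hQ, eval_mul, eval_prod]
    rw [Finset.prod_eq_zero (Finset.mem_univ j) (by simp), mul_zero]
  have hβL : ∀ k : Fin n, γ (Fin.castAdd m k) = β k := fun k => Fin.append_left _ _ _
  have hαR : ∀ k : Fin m, γ (Fin.natAdd n k) = α k := fun k => Fin.append_right _ _ _
  set V : Matrix (Fin (n+m)) (Fin (n+m)) K :=
    Matrix.of (fun (j _l : Fin (n+m)) => γ _l ^ (n + m - 1 - (j:ℕ))) with hV
  set E : Matrix (Fin (n+m)) (Fin (n+m)) K := sylvesterMatrix m n P Q * V with hE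
  set T : Matrix (Fin n) (Fin n) K :=
    Matrix.of (fun i k : Fin n => β k ^ (n - 1 - (i:ℕ)) * P.eval (β k)) with hT
  set B : Matrix (Fin m) (Fin m) K :=
    Matrix.of (fun i k : Fin m => α k ^ (m - 1 - (i:ℕ)) * Q.eval (α k)) with hB
  have hEsub : E.submatrix finSumFinEquiv finSumFinEquiv = Matrix.fromBlocks T 0 0 B := by
    ext i k
    cases i with
    | inl i =>
      have hrow : ((finSumFinEquiv (Sum.inl i) : Fin (n+m)) : ℕ) < n := by
        rw [finSumFinEquiv_apply_left]
        simpa using i.isLt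
      cases k with
      | inl k =>
        simp only [Matrix.submatrix_apply, Matrix.fromBlocks_apply₁₁]
        rw [hE, syl_mul_vand m n P Q hPdeg hQdeg γ, if_pos hrow,
          finSumFinEquiv_apply_left, finSumFinEquiv_apply_left, hβL]
        simp [hT, Fin.coe_castAdd]
      | inr k =>
        simp only [Matrix.submatrix_apply, Matrix.fromBlocks_apply₁₂]
        rw [hE, syl_mul_vand m n P Q hPdeg hQdeg γ, if_pos hrow,
          finSumFinEquiv_apply_right, hαR, hPzero, mul_zero]
        rfl
    | inr i =>
      have hrow : ¬ (((finSumFinEquiv (Sum.inr i) : Fin (n+m)) : ℕ) < n) := by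
        rw [finSumFinEquiv_apply_right]
        simp
      cases k with
      | inl k =>
        simp only [Matrix.submatrix_apply, Matrix.fromBlocks_apply₂₁]
        rw [hE, syl_mul_vand m n P Q hPdeg hQdeg γ, if_neg hrow,
          finSumFinEquiv_apply_left, hβL, hQzero, mul_zero]
        rfl
      | inr k =>
        simp only [Matrix.submatrix_apply, Matrix.fromBlocks_apply₂₂]
        rw [hE, syl_mul_vand m n P Q hPdeg hQdeg γ, if_neg hrow,
          finSumFinEquiv_apply_right, finSumFinEquiv_apply_right, hαR]
        have : n + m - 1 - ((Fin.natAdd n i : Fin (n+m)) : ℕ) = m - 1 - (i : ℕ) := by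
          have := i.isLt
          simp only [Fin.coe_natAdd]
          omega
        rw [this]
        rfl
  -- determinants
  have hdetE : E.det = presultant m n P Q * (sgn K (n+m) * ∏ i : Fin (n+m), ∏ j ∈ Finset.Ioi i, (γ j - γ i)) := by
    rw [hE, Matrix.det_mul, hV, det_vand_rev]
    rfl
  have hdetE' : E.det = T.det * B.det := by
    rw [← Matrix.det_submatrix_equiv_self finSumFinEquiv E, hEsub,
      Matrix.det_fromBlocks_zero₂₁]
  have hdetT : T.det = (sgn K n * ∏ i : Fin n, ∏ j ∈ Finset.Ioi i, (β j - β i)) * ∏ k : Fin n, P.eval (β k) := by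
    have : T = (Matrix.of fun i k : Fin n => β k ^ (n - 1 - (i:ℕ)))
        * Matrix.diagonal (fun k => P.eval (β k)) := by
      ext i k
      simp [hT, Matrix.mul_diagonal]
    rw [this, Matrix.det_mul, det_vand_rev, Matrix.det_diagonal]
  have hdetB : B.det = (sgn K m * ∏ i : Fin m, ∏ j ∈ Finset.Ioi i, (α j - α i)) * ∏ k : Fin m, Q.eval (α k) := by
    have : B = (Matrix.of fun i k : Fin m => α k ^ (m - 1 - (i:ℕ)))
        * Matrix.diagonal (fun k => Q.eval (α k)) := by
      ext i k
      simp [hB, Matrix.mul_diagonal]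
    rw [this, Matrix.det_mul, det_vand_rev, Matrix.det_diagonal]
  have hQα : ∀ k : Fin m, Q.eval (α k) = b * ∏ j : Fin n, (α k - β j) := by
    intro k
    rw [hQ, eval_mul, eval_C, eval_prod]
    simp
  have hQprod : (∏ k : Fin m, Q.eval (α k)) = b ^ m * ∏ k : Fin m, ∏ j : Fin n, (α k - β j) := by
    simp only [hQα]
    rw [Finset.prod_mul_distrib, Finset.prod_const]
    simp
  -- injectivity consequences
  have hβinj : Function.Injective β := by
    intro x y hxy
    have h1 : γ (Fin.castAdd m x) = γ (Fin.castAdd m y) := by rw [hβL, hβL, hxy]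
    have h2 := hγ h1
    have h3 := congrArg Fin.val h2
    simp only [Fin.coe_castAdd] at h3
    exact Fin.ext h3
  have hαinj : Function.Injective α := by
    intro x y hxy
    have h1 : γ (Fin.natAdd n x) = γ (Fin.natAdd n y) := by rw [hαR, hαR, hxy]
    have h2 := hγ h1
    have h3 := congrArg Fin.val h2
    simp only [Fin.coe_natAdd] at h3
    exact Fin.ext (by omega)
  have hcross : ∀ (k : Fin m) (j : Fin n), α k - β j ≠ 0 := by
    intro k j
    refine sub_ne_zero.mpr fun hkj => ?_
    have h1 : γ (Fin.natAdd n k) = γ (Fin.castAdd m j) := by rw [hαR, hβL, hkj]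
    have h2 := congrArg Fin.val (hγ h1)
    simp only [Fin.coe_natAdd, Fin.coe_castAdd] at h2
    have := j.isLt
    omega
  set Δβ : K := ∏ i : Fin n, ∏ j ∈ Finset.Ioi i, (β j - β i) with hΔβ
  set Δα : K := ∏ i : Fin m, ∏ j ∈ Finset.Ioi i, (α j - α i) with hΔα
  set Pc : K := ∏ k : Fin m, ∏ j : Fin n, (α k - β j) with hPc
  have hΔβ0 : Δβ ≠ 0 := by
    rw [hΔβ]
    refine Finset.prod_ne_zero_iff.mpr fun i _ => Finset.prod_ne_zero_iff.mpr fun j hj => ?_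
    refine sub_ne_zero.mpr fun hij => ?_
    have : i < j := Finset.mem_Ioi.mp hj
    exact absurd (hβinj hij) (ne_of_gt this)
  have hΔα0 : Δα ≠ 0 := by
    rw [hΔα]
    refine Finset.prod_ne_zero_iff.mpr fun i _ => Finset.prod_ne_zero_iff.mpr fun j hj => ?_
    refine sub_ne_zero.mpr fun hij => ?_
    have : i < j := Finset.mem_Ioi.mp hj
    exact absurd (hαinj hij) (ne_of_gt this)
  have hPc0 : Pc ≠ 0 := by
    rw [hPc]
    exact Finset.prod_ne_zero_iff.mpr fun k _ => Finset.prod_ne_zero_iff.mpr fun j _ => hcross k j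
  have hsplit : (∏ i : Fin (n+m), ∏ j ∈ Finset.Ioi i, (γ j - γ i)) = (Δβ * Δα) * Pc :=
    delta_split n m β α
  have key : presultant m n P Q * (sgn K (n+m) * ((Δβ * Δα) * Pc))
      = ((sgn K n * Δβ) * ∏ k : Fin n, P.eval (β k))
        * ((sgn K m * Δα) * (b ^ m * Pc)) := by
    rw [← hsplit, ← hdetE, hdetE', hdetT, hdetB, hQprod]
  have hD0 : (sgn K (n+m)) * ((Δβ * Δα) * Pc) ≠ 0 :=
    mul_ne_zero (sgn_ne_zero K _) (mul_ne_zero (mul_ne_zero hΔβ0 hΔα0) hPc0)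
  apply mul_right_cancel₀ hD0
  rw [key]
  have hSS := sgn_mul_self K (n+m)
  linear_combination (-(sgn K n * sgn K m * b ^ m * (∏ k : Fin n, P.eval (β k)) * Δβ * Δα * Pc)) * hSS
lemma nodup_roots_of_eval (h : K[X])
    (hcond : ∀ x : K, h.eval x = 0 → (Polynomial.derivative h).eval x ≠ 0) :
    h.roots.Nodup := by
  by_cases h0 : h = 0
  · simp [h0]
  rw [Multiset.nodup_iff_count_le_one]
  intro a
  rw [Polynomial.count_roots]
  by_contra hcnt
  push_neg at hcnt
  have h2 : 2 ≤ rootMultiplicity a h := hcnt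
  have hdvd : (X - C a) ^ 2 ∣ h :=
    dvd_trans (pow_dvd_pow _ h2) (Polynomial.pow_rootMultiplicity_dvd h a)
  obtain ⟨k, hk⟩ := hdvd
  have hroot : h.eval a = 0 := by simp [hk]
  have hdroot : (Polynomial.derivative h).eval a = 0 := by
    rw [hk]
    simp [derivative_mul, derivative_pow]
  exact hcond a hroot hdroot

lemma multiset_enum (s : Multiset K) (r : ℕ) (hcard : Multiset.card s = r)
    (hnodup : s.Nodup) :
    ∃ w : Fin r → K, Function.Injective w ∧ (∀ x, x ∈ s ↔ ∃ i, w i = x) ∧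
      ∀ f : K → K[X], (s.map f).prod = ∏ i : Fin r, f (w i) := by
  have hlen : s.toList.length = r := by rw [Multiset.length_toList, hcard]
  have hlnodup : s.toList.Nodup := by
    rw [← Multiset.coe_toList s] at hnodup
    exact Multiset.coe_nodup.mp hnodup
  refine ⟨fun i => s.toList.get (Fin.cast hlen.symm i), ?_, ?_, ?_⟩
  · intro x y hxy
    have := List.nodup_iff_injective_get.mp hlnodup hxy
    have h2 := congrArg Fin.val this
    simp only [Fin.coe_cast] at h2
    exact Fin.ext h2
  · intro x
    rw [← Multiset.mem_toList, List.mem_iff_get]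
    constructor
    · rintro ⟨i, rfl⟩
      exact ⟨Fin.cast hlen i, rfl⟩
    · rintro ⟨i, hi⟩
      exact ⟨Fin.cast hlen.symm i, hi⟩
  · intro f
    conv_lhs => rw [← Multiset.coe_toList s]
    rw [Multiset.map_coe, Multiset.prod_coe]
    have h1 : (List.map f s.toList).prod = ∏ i : Fin s.toList.length, f (s.toList.get i) := by
      conv_lhs => rw [← List.ofFn_get s.toList]
      rw [List.map_ofFn, List.prod_ofFn]
      rfl
    rw [h1]
    exact Fintype.prod_equiv (finCongr hlen) _ _ (fun i => rfl)

lemma append_inj {n m : ℕ} {β : Fin n → K} {α : Fin m → K}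
    (hβ : Function.Injective β) (hα : Function.Injective α)
    (hne : ∀ i j, α i ≠ β j) : Function.Injective (Fin.append β α) := by
  intro u w huw
  induction u using Fin.addCases with
  | left i =>
    induction w using Fin.addCases with
    | left j =>
      rw [Fin.append_left, Fin.append_left] at huw
      rw [hβ huw]
    | right j =>
      rw [Fin.append_left, Fin.append_right] at huw
      exact absurd huw.symm (hne j i)
  | right i =>
    induction w using Fin.addCases with
    | left j =>
      rw [Fin.append_right, Fin.append_left] at huw
      exact absurd huw (hne i j)
    | right j =>
      rw [Fin.append_right, Fin.append_right] at huw
      rw [hα huw]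

lemma squarefree_unit_mul (c : K) (hc : c ≠ 0) (W : K[X]) (h : Squarefree W) :
    Squarefree (C c * W) := by
  intro x hx
  apply h x
  have hdvd : C c * W ∣ W := ⟨C c⁻¹, by rw [mul_comm (C c) W, mul_assoc, ← C_mul,
    mul_inv_cancel₀ hc, C_1, mul_one]⟩
  exact dvd_trans hx hdvd
theorem Dpoly_pos_squarefree {K : Type*} [Field K] [IsAlgClosed K] (g : K[X]) (hm : g.Monic)
    (hdeg : 2 ≤ g.natDegree)
    (hr1 : 1 ≤ (Polynomial.derivative g).natDegree)
    (hsep : ∀ x : K, (Polynomial.derivative g).eval x = 0 →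
      (Polynomial.derivative (Polynomial.derivative g)).eval x ≠ 0)
    (hvals : ∀ x y : K, (Polynomial.derivative g).eval x = 0 →
      (Polynomial.derivative g).eval y = 0 → g.eval x = g.eval y → x = y) :
    0 < (Dpoly g).natDegree ∧ Squarefree (Dpoly g) := by
  set m : ℕ := g.natDegree with hmdef
  set g' : K[X] := Polynomial.derivative g with hg'
  set r : ℕ := g'.natDegree with hr
  have hd0 : g' ≠ 0 := by
    intro h
    rw [hr, h] at hr1
    simp at hr1
  set b : K := g'.leadingCoeff with hbdef
  have hb : b ≠ 0 := leadingCoeff_ne_zero.mpr hd0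
  have hsplits : g'.Splits := IsAlgClosed.splits g'
  have hcard : Multiset.card g'.roots = r := (splits_iff_card_roots).mp hsplits
  have hnodupR : g'.roots.Nodup := nodup_roots_of_eval g' (fun x hx => hsep x hx)
  obtain ⟨β, hβinj, hβmem, hβprod⟩ := multiset_enum g'.roots r hcard hnodupR
  have hQfact : g' = C b * ∏ j : Fin r, (X - C (β j)) := by
    conv_lhs => rw [hsplits.eq_prod_roots]
    rw [hβprod (fun a => X - C a)]
  have hβroot : ∀ j, g'.eval (β j) = 0 := by
    intro j
    have : β j ∈ g'.roots := (hβmem _).mpr ⟨j, rfl⟩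
    exact (Polynomial.mem_roots'.mp this).2
  have hrootβ : ∀ x : K, g'.eval x = 0 → ∃ j, β j = x := by
    intro x hx
    exact (hβmem x).mp (Polynomial.mem_roots'.mpr ⟨hd0, hx⟩)
  set v : Fin r → K := fun j => -(g.eval (β j)) with hv
  have hvinj : Function.Injective v := by
    intro i j hij
    have : g.eval (β i) = g.eval (β j) := by
      have := congrArg Neg.neg hij
      simpa [hv] using this
    exact hβinj (hvals (β i) (β j) (hβroot i) (hβroot j) this)
  set c : K := (-1 : K) ^ (m * (m-1) / 2) * (sgn K (r+m) * sgn K r * sgn K m * b ^ m)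
    with hcdef
  have hc : c ≠ 0 := by
    apply mul_ne_zero (pow_ne_zero _ (by norm_num))
    exact mul_ne_zero (mul_ne_zero (mul_ne_zero (sgn_ne_zero K _) (sgn_ne_zero K _))
      (sgn_ne_zero K _)) (pow_ne_zero _ hb)
  set G : K[X] := C c * ∏ j : Fin r, (X - C (v j)) with hG
  -- structure of P
  set P : Polynomial (Polynomial K) := g.map C + C X with hP
  have hgmapmon : (g.map (C : K →+* K[X])).Monic := hm.map _
  have hgmapdeg : (g.map (C : K →+* K[X])).natDegree = m := hm.natDegree_map _
  have hdegCX : (C (X : K[X])).degree < (g.map (C : K →+* K[X])).degree := by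
    apply lt_of_le_of_lt (degree_C_le)
    rw [degree_eq_natDegree hgmapmon.ne_zero, hgmapdeg]
    exact_mod_cast (by omega : (0:ℕ) < m)
  have hPmon : P.Monic := hgmapmon.add_of_left hdegCX
  have hPdeg : P.natDegree = m := by
    rw [hP]
    have := degree_add_eq_left_of_degree_lt hdegCX
    rw [← hgmapdeg]
    exact natDegree_eq_of_degree_eq this
  have hDP : Polynomial.derivative P = g'.map C := by
    rw [hP, derivative_add, derivative_map, derivative_C, add_zero]
  have hDexp : Dpoly g = (-1 : K[X]) ^ (m * (m-1) / 2) *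
      presultant m (m-1) P (g'.map C) := by
    rw [Dpoly, pdisc, ← hP, hPdeg, hDP]
  have hrm : r ≤ m - 1 := by
    rw [hr, hg', hmdef]
    exact natDegree_derivative_le g
  -- pointwise evaluation
  have hGagree : ∀ t₀ : K, (∀ j, t₀ ≠ v j) → (Dpoly g).eval t₀ = G.eval t₀ := by
    intro t₀ ht
    set h : K[X] := g + C t₀ with hh
    have hdegCt : (C t₀).degree < g.degree := by
      apply lt_of_le_of_lt (degree_C_le)
      rw [degree_eq_natDegree hm.ne_zero, ← hmdef]
      exact_mod_cast (by omega : (0:ℕ) < m)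
    have hhmon : h.Monic := hm.add_of_left hdegCt
    have hhdeg : h.natDegree = m :=
      natDegree_eq_of_degree_eq (degree_add_eq_left_of_degree_lt hdegCt)
    have hderh : Polynomial.derivative h = g' := by
      rw [hh, derivative_add, derivative_C, add_zero, hg']
    have hsplitsh : h.Splits := IsAlgClosed.splits h
    have hcardh : Multiset.card h.roots = m := by
      rw [splits_iff_card_roots.mp hsplitsh, hhdeg]
    have hnoduph : h.roots.Nodup := by
      apply nodup_roots_of_eval
      intro x hx hdx
      rw [hderh] at hdx
      obtain ⟨j, hj⟩ := hrootβ x hdx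
      apply ht j
      have : g.eval x + t₀ = 0 := by simpa [hh] using hx
      rw [hv]
      simp only [← hj] at this ⊢
      linear_combination this
    obtain ⟨α, hαinj, hαmem, hαprod⟩ := multiset_enum h.roots m hcardh hnoduph
    have hhfact : h = ∏ i : Fin m, (X - C (α i)) := by
      conv_lhs => rw [hsplitsh.eq_prod_roots_of_monic hhmon]
      rw [hαprod (fun a => X - C a)]
    have hαroot : ∀ i, h.eval (α i) = 0 := by
      intro i
      have : α i ∈ h.roots := (hαmem _).mpr ⟨i, rfl⟩
      exact (Polynomial.mem_roots'.mp this).2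
    have hcrossne : ∀ i j, α i ≠ β j := by
      intro i j hij
      have hgx : g'.eval (α i) = 0 := by rw [hij]; exact hβroot j
      have hx : h.eval (α i) = 0 := hαroot i
      obtain ⟨j', hj'⟩ := hrootβ (α i) hgx
      apply ht j'
      have : g.eval (α i) + t₀ = 0 := by simpa [hh] using hx
      rw [hv]
      simp only [← hj'] at this ⊢
      linear_combination this
    have happ : Function.Injective (Fin.append β α) := append_inj hβinj hαinj hcrossne
    -- now compute
    have hφ : ∀ (x : Polynomial K), Polynomial.eval t₀ x = Polynomial.evalRingHom t₀ x :=
      fun x => rfl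
    have hPmap : P.map (Polynomial.evalRingHom t₀) = h := by
      rw [hP, Polynomial.map_add, Polynomial.map_map, Polynomial.map_C]
      have hcomp : (Polynomial.evalRingHom t₀).comp (C : K →+* K[X]) = RingHom.id K := by
        ext x
        simp
      rw [hcomp, Polynomial.map_id]
      simp [hh]
    have hQmap : (g'.map C).map (Polynomial.evalRingHom t₀) = g' := by
      rw [Polynomial.map_map]
      have hcomp : (Polynomial.evalRingHom t₀).comp (C : K →+* K[X]) = RingHom.id K := by
        ext x
        simp
      rw [hcomp, Polynomial.map_id]
    have hstep1 : (Dpoly g).eval t₀ = (-1 : K) ^ (m * (m-1) / 2) *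
        presultant m (m-1) h g' := by
      rw [hDexp, eval_mul, eval_pow, eval_neg, eval_one, hφ, presultant_map, hPmap, hQmap]
    have hstep2 : presultant m (m-1) h g' = presultant m r h g' := by
      have hPc : h.coeff m = 1 := by
        rw [← hhdeg]
        exact hhmon.coeff_natDegree
      exact presultant_ge m h g' hPc r
        (fun k hk => coeff_eq_zero_of_natDegree_lt hk) (m-1) hrm
    have hstep3 : presultant m r h g'
        = sgn K (r+m) * sgn K r * sgn K m * b ^ m * ∏ j : Fin r, h.eval (β j) :=
      presultant_eq m r h g' α β b hhfact hQfact happ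
    rw [hstep1, hstep2, hstep3, hG]
    rw [eval_mul, eval_C, eval_prod]
    have : ∀ j : Fin r, Polynomial.eval t₀ (X - C (v j)) = g.eval (β j) + t₀ := by
      intro j
      rw [eval_sub, eval_X, eval_C, hv]
      ring
    rw [Finset.prod_congr rfl (fun j _ => this j)]
    have hev : ∀ j : Fin r, h.eval (β j) = g.eval (β j) + t₀ := by
      intro j
      rw [hh, eval_add, eval_C]
    rw [Finset.prod_congr rfl (fun j _ => hev j), hcdef]
    ring
  have hDG : Dpoly g = G := by
    apply Polynomial.eq_of_infinite_eval_eq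
    have hsub : (Set.range v)ᶜ ⊆ {x | Polynomial.eval x (Dpoly g) = Polynomial.eval x G} := by
      intro x hx
      exact hGagree x (fun j hj => hx ⟨j, hj.symm⟩)
    exact ((Set.finite_range v).infinite_compl).mono hsub
  have hGdeg : G.natDegree = r := by
    rw [hG, natDegree_C_mul hc, natDegree_prod _ _ (fun i _ => X_sub_C_ne_zero (v i))]
    simp [natDegree_X_sub_C]
  constructor
  · rw [hDG, hGdeg]
    omega
  · rw [hDG, hG]
    exact squarefree_unit_mul c hc _ ((separable_prod_X_sub_C_iff.mpr hvinj).squarefree)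
theorem main_exists (K : Type*) [Field K] [IsAlgClosed K] (n : ℕ) (hn : 2 ≤ n)
    (h2 : (2 : K) ≠ 0) :
    ∃ a : Fin (n - 1) → K,
      0 < (Dpoly (fPoly n a)).natDegree ∧ Squarefree (Dpoly (fPoly n a)) := by
  have hcast : ((n - 1 : ℕ) : K) = (n : K) - 1 := by
    push_cast [Nat.cast_sub (by omega : 1 ≤ n)]
    ring
  by_cases hcn : (n : K) = 0
  · -- case A : p ∣ n, use g = X^n + X^2
    have hn3 : 3 ≤ n := by
      rcases Nat.lt_or_ge n 3 with h | h
      · interval_cases n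
        exact absurd (by exact_mod_cast hcn) h2
      · exact h
    refine ⟨fun i => if (i : ℕ) = 1 then 1 else 0, ?_⟩
    set g : K[X] := X ^ n + X ^ 2 with hg
    have hfa : fPoly n (fun i : Fin (n-1) => if (i : ℕ) = 1 then (1:K) else 0) = g := by
      rw [fPoly, hg]
      congr 1
      rw [Fin.sum_univ_eq_sum_range (fun j => C (if j = 1 then (1:K) else 0) * X ^ (j+1)) (n-1)]
      simp only [apply_ite C, map_one, map_zero, ite_mul, one_mul, zero_mul]
      rw [Finset.sum_ite_eq' (Finset.range (n-1)) 1 (fun j => (X : K[X]) ^ (j+1))]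
      rw [if_pos (Finset.mem_range.mpr (by omega))]
    have hgd : Polynomial.derivative g = C 2 * X := by
      rw [hg, derivative_add, derivative_X_pow, derivative_X_pow, hcn, map_zero, zero_mul,
        zero_add]
      norm_num
    have hgmon : g.Monic := by
      apply (monic_X_pow n).add_of_left
      rw [degree_X_pow, degree_X_pow]
      exact_mod_cast (by omega : 2 < n)
    have hgdeg : g.natDegree = n := by
      have hlt : (X ^ 2 : K[X]).degree < (X ^ n : K[X]).degree := by
        rw [degree_X_pow, degree_X_pow]
        exact_mod_cast (by omega : 2 < n)
      rw [hg, natDegree_eq_of_degree_eq (degree_add_eq_left_of_degree_lt hlt), natDegree_X_pow]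
    rw [hfa]
    apply Dpoly_pos_squarefree g hgmon (by rw [hgdeg]; omega)
    · rw [hgd, natDegree_C_mul h2, natDegree_X]
    · intro x _
      rw [hgd, derivative_C_mul, derivative_X, mul_one, eval_C]
      exact h2
    · intro x y hx hy _
      rw [hgd] at hx hy
      simp only [eval_mul, eval_C, eval_X] at hx hy
      rcases mul_eq_zero.mp hx with h | h
      · exact absurd h h2
      rcases mul_eq_zero.mp hy with h' | h'
      · exact absurd h' h2
      rw [h, h']
  by_cases hcn1 : ((n - 1 : ℕ) : K) = 0
  · -- case C : p ∣ n - 1, so (n : K) = 1 ; use g = X^n + (X + X^2)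
    have hne1 : (n : K) = 1 := by
      have := hcast
      rw [hcn1] at this
      linear_combination -this
    have hn4 : 4 ≤ n := by
      rcases Nat.lt_or_ge n 4 with h | h
      · interval_cases n
        · simp at hcn1
        · norm_num at hcn1
          exact (h2 hcn1).elim
      · exact h
    refine ⟨fun i => if (i : ℕ) ≤ 1 then 1 else 0, ?_⟩
    set g : K[X] := X ^ n + (X + X ^ 2) with hg
    have hfa : fPoly n (fun i : Fin (n-1) => if (i : ℕ) ≤ 1 then (1:K) else 0) = g := by
      rw [fPoly, hg]
      congr 1
      rw [Fin.sum_univ_eq_sum_range (fun j => C (if j ≤ 1 then (1:K) else 0) * X ^ (j+1)) (n-1)]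
      have hpt : ∀ j : ℕ, C (if j ≤ 1 then (1:K) else 0) * X ^ (j+1)
          = (if j = 0 then (X:K[X]) ^ (j+1) else 0) + (if j = 1 then (X:K[X]) ^ (j+1) else 0) := by
        intro j
        rcases Nat.lt_or_ge j 2 with h | h
        · interval_cases j <;> simp
        · rw [if_neg (by omega), if_neg (by omega), if_neg (by omega), map_zero, zero_mul,
            add_zero]
      rw [Finset.sum_congr rfl (fun j _ => hpt j), Finset.sum_add_distrib,
        Finset.sum_ite_eq' (Finset.range (n-1)) 0 (fun j => (X : K[X]) ^ (j+1)),
        Finset.sum_ite_eq' (Finset.range (n-1)) 1 (fun j => (X : K[X]) ^ (j+1)),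
        if_pos (Finset.mem_range.mpr (by omega)), if_pos (Finset.mem_range.mpr (by omega))]
      norm_num
    have hgd : Polynomial.derivative g = X ^ (n-1) + (1 + C 2 * X) := by
      rw [hg, derivative_add, derivative_add, derivative_X_pow, derivative_X_pow, derivative_X,
        hne1, map_one, one_mul]
      norm_num
    have hgmon : g.Monic := by
      apply (monic_X_pow n).add_of_left
      apply lt_of_le_of_lt (degree_add_le _ _)
      rw [degree_X_pow, degree_X_pow]
      apply max_lt
      · exact lt_of_le_of_lt degree_X_le (by exact_mod_cast (by omega : 1 < n))
      · exact_mod_cast (by omega : 2 < n)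
    have hgdeg : g.natDegree = n := by
      have hlt : (X + X ^ 2 : K[X]).degree < (X ^ n : K[X]).degree := by
        apply lt_of_le_of_lt (degree_add_le _ _)
        rw [degree_X_pow, degree_X_pow]
        apply max_lt
        · exact lt_of_le_of_lt degree_X_le (by exact_mod_cast (by omega : 1 < n))
        · exact_mod_cast (by omega : 2 < n)
      rw [hg, natDegree_eq_of_degree_eq (degree_add_eq_left_of_degree_lt hlt), natDegree_X_pow]
    have hgddeg : (Polynomial.derivative g).natDegree = n - 1 := by
      have hlt : (1 + C 2 * X : K[X]).degree < (X ^ (n-1) : K[X]).degree := by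
        apply lt_of_le_of_lt (degree_add_le _ _)
        rw [degree_X_pow]
        apply max_lt
        · exact lt_of_le_of_lt degree_one_le (by exact_mod_cast (by omega : 0 < n - 1))
        · apply lt_of_le_of_lt (degree_mul_le _ _)
          rw [degree_X]
          apply lt_of_le_of_lt (add_le_add degree_C_le (le_refl _))
          rw [zero_add]
          exact_mod_cast (by omega : 1 < n - 1)
      rw [hgd, natDegree_eq_of_degree_eq (degree_add_eq_left_of_degree_lt hlt), natDegree_X_pow]
    rw [hfa]
    apply Dpoly_pos_squarefree g hgmon (by rw [hgdeg]; omega)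
    · rw [hgddeg]; omega
    · intro x _
      have hdd : Polynomial.derivative (Polynomial.derivative g) = C 2 := by
        rw [hgd, derivative_add, derivative_add, derivative_X_pow, derivative_one,
          derivative_C_mul, derivative_X, hcn1, map_zero, zero_mul, zero_add, zero_add, mul_one]
      rw [hdd, eval_C]
      exact h2
    · intro x y hx hy hxy
      rw [hgd] at hx hy
      rw [hg] at hxy
      simp only [eval_add, eval_pow, eval_mul, eval_C, eval_X, eval_one] at hx hy hxy
      have hxn : x ^ n = x ^ (n-1) * x := by
        rw [← pow_succ]
        congr 1
        omega
      have hyn : y ^ n = y ^ (n-1) * y := by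
        rw [← pow_succ]
        congr 1
        omega
      -- g x = -x^2, g y = -y^2  ⇒  x^2 = y^2
      have hsq : (x - y) * (x + y) = 0 := by
        linear_combination -hxy + hxn - hyn + x*hx - y*hy
      rcases mul_eq_zero.mp hsq with h | h
      · linear_combination h
      · -- y = -x : derive contradiction
        exfalso
        have hyx : y = -x := by linear_combination h
        rw [hyx] at hy
        rcases Nat.even_or_odd n with hpar | hpar
        · have hodd : Odd (n - 1) := Nat.Even.sub_odd (by omega) hpar odd_one
          rw [hodd.neg_pow] at hy
          -- hy : -x^(n-1) + (1 + 2*(-x)) = 0 ; add hx : 2 + 2x - 2x ... 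
          apply h2
          linear_combination hx + hy
        · have heven : Even (n - 1) := Nat.Odd.sub_odd hpar odd_one
          rw [heven.neg_pow] at hy
          -- hx - hy : 4x = 0 → x = 0 → then hx : 1 = 0
          have hx0 : x = 0 := by
            have h4 : (2:K) * (2 * x) = 0 := by linear_combination hx - hy
            rcases mul_eq_zero.mp h4 with h' | h'
            · exact absurd h' h2
            rcases mul_eq_zero.mp h' with h'' | h''
            · exact absurd h'' h2
            · exact h''
          rw [hx0] at hx
          apply h2
          have h1 : (0:K) ^ (n-1) = 0 := zero_pow (by omega)
          rw [h1] at hx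
          linear_combination 2 * hx
  · -- case B : p ∤ n (n-1) ; use g = X^n + X
    refine ⟨fun i => if (i : ℕ) = 0 then 1 else 0, ?_⟩
    set g : K[X] := X ^ n + X with hg
    have hfa : fPoly n (fun i : Fin (n-1) => if (i : ℕ) = 0 then (1:K) else 0) = g := by
      rw [fPoly, hg]
      congr 1
      rw [Fin.sum_univ_eq_sum_range (fun j => C (if j = 0 then (1:K) else 0) * X ^ (j+1)) (n-1)]
      simp only [apply_ite C, map_one, map_zero, ite_mul, one_mul, zero_mul]
      rw [Finset.sum_ite_eq' (Finset.range (n-1)) 0 (fun j => (X : K[X]) ^ (j+1))]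
      rw [if_pos (Finset.mem_range.mpr (by omega))]
      norm_num
    have hgd : Polynomial.derivative g = C (n : K) * X ^ (n-1) + 1 := by
      rw [hg, derivative_add, derivative_X_pow, derivative_X]
    have hgmon : g.Monic := by
      apply (monic_X_pow n).add_of_left
      rw [degree_X_pow]
      exact lt_of_le_of_lt degree_X_le (by exact_mod_cast (by omega : 1 < n))
    have hgdeg : g.natDegree = n := by
      have hlt : (X : K[X]).degree < (X ^ n : K[X]).degree := by
        rw [degree_X_pow]
        exact lt_of_le_of_lt degree_X_le (by exact_mod_cast (by omega : 1 < n))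
      rw [hg, natDegree_eq_of_degree_eq (degree_add_eq_left_of_degree_lt hlt), natDegree_X_pow]
    have hgddeg : (Polynomial.derivative g).natDegree = n - 1 := by
      have hlt : (1 : K[X]).degree < (C (n:K) * X ^ (n-1)).degree := by
        rw [degree_C_mul_X_pow _ hcn]
        exact lt_of_le_of_lt degree_one_le (by exact_mod_cast (by omega : 0 < n - 1))
      rw [hgd, natDegree_eq_of_degree_eq (degree_add_eq_left_of_degree_lt hlt),
        natDegree_C_mul_X_pow _ _ hcn]
    have hroot_ne : ∀ x : K, (Polynomial.derivative g).eval x = 0 → x ≠ 0 := by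
      intro x hx hx0
      rw [hgd] at hx
      simp only [eval_add, eval_mul, eval_pow, eval_C, eval_X, eval_one, hx0,
        zero_pow (by omega : n - 1 ≠ 0)] at hx
      rw [mul_zero, zero_add] at hx
      exact one_ne_zero hx
    rw [hfa]
    apply Dpoly_pos_squarefree g hgmon (by rw [hgdeg]; omega)
    · rw [hgddeg]; omega
    · intro x hx
      have hx0 := hroot_ne x hx
      have hdd : Polynomial.derivative (Polynomial.derivative g)
          = C (n:K) * (C ((n-1 : ℕ) : K) * X ^ (n-2)) := by
        rw [hgd, derivative_add, derivative_one, add_zero, derivative_C_mul, derivative_X_pow]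
        rfl
      rw [hdd]
      simp only [eval_mul, eval_C, eval_pow, eval_X]
      exact mul_ne_zero hcn (mul_ne_zero hcn1 (pow_ne_zero _ hx0))
    · intro x y hx hy hxy
      rw [hgd] at hx hy
      rw [hg] at hxy
      simp only [eval_add, eval_mul, eval_pow, eval_C, eval_X, eval_one] at hx hy hxy
      have hxn : x ^ n = x ^ (n-1) * x := by
        rw [← pow_succ]
        congr 1
        omega
      have hyn : y ^ n = y ^ (n-1) * y := by
        rw [← pow_succ]
        congr 1
        omega
      have hkey : (((n-1:ℕ):K)) * (x - y) = 0 := by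
        rw [hcast]
        linear_combination (n:K)*hxy - x*hx + y*hy - (n:K)*hxn + (n:K)*hyn
      rcases mul_eq_zero.mp hkey with h | h
      · exact absurd h hcn1
      · linear_combination h

/-- **Non-vanishing of the discriminant**: for `q` odd and `n ≥ 2` there is a coefficient
vector `a` over the algebraic closure `F̄_q` such that `D_{f_a}(t) = disc_x(f_a(x)+t)` has
positive degree in `t` and is squarefree. -/
theorem disc_not_identically_zero (q n : ℕ) (hq : Odd q) (hn : 2 ≤ n)
    (F : Type) [Field F] [Fintype F] (hF : Fintype.card F = q) :
    ∃ a : Fin (n - 1) → AlgebraicClosure F,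
      0 < (Dpoly (fPoly n a)).natDegree ∧ Squarefree (Dpoly (fPoly n a)) := by
  have h2 : (2 : AlgebraicClosure F) ≠ 0 := by
    intro h
    have h2F : (2 : F) = 0 := by
      have hinj := (algebraMap F (AlgebraicClosure F)).injective
      apply hinj
      rw [map_ofNat, map_zero, h]
    have hdvd : ringChar F ∣ 2 := ringChar.dvd h2F
    rcases (Nat.dvd_prime Nat.prime_two).mp hdvd with h1 | h1
    · exact CharP.ringChar_ne_one h1
    · have heven := FiniteField.even_card_of_char_two h1
      rw [hF] at heven
      rw [Nat.odd_iff] at hq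
      omega
  exact main_exists (AlgebraicClosure F) n hn h2
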